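/- arXiv:2109.13832 — 2 statements merged into one kernel-verified Lean document; each statement's English description precedes it below -/
import Mathlib

section
/- Let V : ℕ → ℝ≥0 satisfy V(k+1) - V(k) ≤ -λ·V(k) + ρ(u) for all k, with 0 < λ < 1, ρ : ℝ≥0 → ℝ≥0 monotone, and u ≥ 0 fixed. If moreover α·(y k)^b ≤ V(k) for constants α, b > 0 and a sequence y : ℕ → ℝ≥0, then y(k) ≤ ((1-λ)^k · V(0)/α)^(1/b) + (ρ(u)/(λ·α))^(1/b) for all k. -/
lemma real_rpow_add_le_add_rpow {x y p : ℝ} (hx : 0 ≤ x) (hy : 0 ≤ y)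
    (hp : 0 ≤ p) (hp1 : p ≤ 1) : (x + y) ^ p ≤ x ^ p + y ^ p := by
  have := NNReal.rpow_add_le_add_rpow x.toNNReal y.toNNReal hp hp1
  have h := NNReal.coe_le_coe.2 this
  simpa [NNReal.coe_rpow, Real.coe_toNNReal _ hx, Real.coe_toNNReal _ hy,
    Real.coe_toNNReal _ (add_nonneg hx hy)] using h

theorem stmt_1 (V y : ℕ → ℝ) (lam u α b : ℝ) (ρ : ℝ → ℝ)
    (hV : ∀ k, 0 ≤ V k) (hy : ∀ k, 0 ≤ y k)
    (hlam0 : 0 < lam) (hlam1 : lam < 1)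
    (hρ : Monotone ρ) (hρ0 : ∀ t, 0 ≤ t → 0 ≤ ρ t) (hu : 0 ≤ u)
    (hα : 0 < α) (hb : 1 ≤ b)
    (hrec : ∀ k, V (k + 1) - V k ≤ -lam * V k + ρ u)
    (hlow : ∀ k, α * (y k) ^ b ≤ V k) :
    ∀ k, y k ≤ ((1 - lam) ^ k * V 0 / α) ^ (1 / b) + (ρ u / (lam * α)) ^ (1 / b) := by
  have hb0 : 0 < b := lt_of_lt_of_le one_pos hb
  have hρu : 0 ≤ ρ u := hρ0 u hu
  have h1lam : 0 ≤ 1 - lam := by linarith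
  -- Step 1: V k ≤ (1-lam)^k * V 0 + ρ u / lam
  have hVbound : ∀ k, V k ≤ (1 - lam) ^ k * V 0 + ρ u / lam := by
    intro k
    induction k with
    | zero => simp; positivity
    | succ n ih =>
      have h := hrec n
      have : V (n + 1) ≤ (1 - lam) * V n + ρ u := by linarith
      calc V (n + 1) ≤ (1 - lam) * V n + ρ u := this
        _ ≤ (1 - lam) * ((1 - lam) ^ n * V 0 + ρ u / lam) + ρ u :=
            by nlinarith [mul_le_mul_of_nonneg_left ih h1lam]
        _ = (1 - lam) ^ (n + 1) * V 0 + ((1 - lam) * (ρ u / lam) + ρ u) := by ring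
        _ ≤ (1 - lam) ^ (n + 1) * V 0 + ρ u / lam := by
            have : (1 - lam) * (ρ u / lam) + ρ u = ρ u / lam := by
              field_simp; ring
            linarith
  intro k
  have hyb : (y k) ^ b ≤ (1 - lam) ^ k * V 0 / α + ρ u / (lam * α) := by
    have h := (hlow k).trans (hVbound k)
    rw [div_add_div _ _ (ne_of_gt hα) (by positivity : lam * α ≠ 0)]
    rw [le_div_iff₀ (by positivity)]
    have : α * (y k) ^ b * lam ≤ ((1 - lam) ^ k * V 0 + ρ u / lam) * lam :=
      mul_le_mul_of_nonneg_right h (le_of_lt hlam0)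
    have heq : ((1 - lam) ^ k * V 0 + ρ u / lam) * lam
        = (1 - lam) ^ k * V 0 * lam + ρ u := by field_simp
    nlinarith [this]
  have hykb : y k = ((y k) ^ b) ^ (1 / b) := by
    rw [← Real.rpow_mul (hy k), mul_one_div, div_self (ne_of_gt hb0), Real.rpow_one]
  have h2 : ((y k) ^ b) ^ (1 / b) ≤ ((1 - lam) ^ k * V 0 / α + ρ u / (lam * α)) ^ (1 / b) :=
    Real.rpow_le_rpow (Real.rpow_nonneg (hy k) b) hyb (one_div_nonneg.2 hb0.le)
  have h3 : ((1 - lam) ^ k * V 0 / α + ρ u / (lam * α)) ^ (1 / b)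
      ≤ ((1 - lam) ^ k * V 0 / α) ^ (1 / b) + (ρ u / (lam * α)) ^ (1 / b) :=
    real_rpow_add_le_add_rpow (div_nonneg (mul_nonneg (pow_nonneg h1lam k) (hV 0)) hα.le)
      (div_nonneg hρu (by positivity)) (one_div_nonneg.2 hb0.le)
      (by rw [div_le_one hb0]; exact hb)
  calc y k = ((y k) ^ b) ^ (1 / b) := hykb
    _ ≤ _ := h2.trans h3
end

section
/- Let A, B, C, D, Â, B̂, Ĉ, D̂, P, K, Q, R, T, M, M' be real matrices of compatible dimensions, with M, M' symmetric positive definite, satisfying: (i) CᵀC ⪯ M, (ii) 3(A+BK)ᵀM'(A+BK) - M ⪯ -κM for some 0 < κ < 1, (iii) AP = PÂ - BQ, (iv) D = PD̂ - BT, (v) CP = Ĉ. Define V(x, x̂) = (x-Px̂)ᵀM(x-Px̂) and u = K(x-Px̂) + Qx̂ + Rû + Tŵ. Then for all x, x̂, w, ŵ, û: (a) |Cx - Ĉx̂|² ≤ V(x,x̂), and (b) V'(Ax+Dw+Bu, Âx̂+D̂ŵ+B̂û) - V(x,x̂) ≤ -κ·V(x,x̂) + 3|√M' D|²·|w-ŵ|²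 + 3|√M'(BR - PB̂)|²·|û|², where V'(e) uses M' in place of M and |√M' X| denotes the operator norm of √M' X. -/
open Matrix
open scoped Matrix.Norms.L2Operator

section Aux
variable {n k : ℕ}

lemma aux_dot_nonneg {N : Matrix (Fin n) (Fin n) ℝ} (hN : N.PosSemidef) (v : Fin n → ℝ) :
    0 ≤ v ⬝ᵥ N.mulVec v := by simpa using hN.dotProduct_mulVec_nonneg v

lemma aux_quad_pull (X : Matrix (Fin n) (Fin k) ℝ) (N : Matrix (Fin n) (Fin n) ℝ)
    (e : Fin k → ℝ) :
    (X.mulVec e) ⬝ᵥ N.mulVec (X.mulVec e) = e ⬝ᵥ (Xᵀ * N * X).mulVec e := by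
  rw [← mulVec_mulVec, ← mulVec_mulVec, dotProduct_mulVec e, vecMul_transpose]

lemma aux_quad_pull1 {q : ℕ} (X : Matrix (Fin q) (Fin k) ℝ) (e : Fin k → ℝ) :
    (X.mulVec e) ⬝ᵥ (X.mulVec e) = e ⬝ᵥ (Xᵀ * X).mulVec e := by
  rw [← mulVec_mulVec, dotProduct_mulVec e, vecMul_transpose]

lemma aux_dot_symm {N : Matrix (Fin n) (Fin n) ℝ} (hN : N.IsHermitian)
    (a b : Fin n → ℝ) : a ⬝ᵥ N.mulVec b = b ⬝ᵥ N.mulVec a := by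
  have hNt : Nᵀ = N := by
    have := hN; rwa [IsHermitian, conjTranspose_eq_transpose_of_trivial] at this
  rw [dotProduct_mulVec a, ← hNt, vecMul_transpose, hNt, dotProduct_comm]

lemma aux_three {N : Matrix (Fin n) (Fin n) ℝ} (hN : N.PosSemidef) (a b c : Fin n → ℝ) :
    (a + b + c) ⬝ᵥ N.mulVec (a + b + c) ≤
      3 * (a ⬝ᵥ N.mulVec a) + 3 * (b ⬝ᵥ N.mulVec b) + 3 * (c ⬝ᵥ N.mulVec c) := by
  have pair : ∀ u v : Fin n → ℝ, 2 * (u ⬝ᵥ N.mulVec v) ≤ u ⬝ᵥ N.mulVec u + v ⬝ᵥ N.mulVec v := by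
    intro u v
    have h0 := aux_dot_nonneg hN (u - v)
    have hs := aux_dot_symm hN.1 u v
    simp only [mulVec_sub, dotProduct_sub, sub_dotProduct] at h0
    linarith
  have hab := pair a b
  have hac := pair a c
  have hbc := pair b c
  have hsab := aux_dot_symm hN.1 a b
  have hsac := aux_dot_symm hN.1 a c
  have hsbc := aux_dot_symm hN.1 b c
  simp only [mulVec_add, dotProduct_add, add_dotProduct] at *
  linarith

lemma aux_dot_eq_norm_sq (z : Fin k → ℝ) :
    z ⬝ᵥ z = ‖(EuclideanSpace.equiv (Fin k) ℝ).symm z‖ ^ 2 := by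
  rw [EuclideanSpace.norm_eq]
  rw [Real.sq_sqrt (by positivity)]
  simp [dotProduct, sq]

lemma aux_norm_bound {N : Matrix (Fin n) (Fin n) ℝ} (hN : N.PosSemidef)
    (X : Matrix (Fin n) (Fin k) ℝ) (y : Fin k → ℝ) :
    (X.mulVec y) ⬝ᵥ N.mulVec (X.mulVec y) ≤ ‖((hN.1.eigenvectorUnitary : Matrix (Fin n) (Fin n) ℝ) *
            diagonal (fun i => Real.sqrt (hN.1.eigenvalues i)) *
            (star hN.1.eigenvectorUnitary : Matrix (Fin n) (Fin n) ℝ)) * X‖ ^ 2 * (y ⬝ᵥ y) := by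
  set S := ((hN.1.eigenvectorUnitary : Matrix (Fin n) (Fin n) ℝ) *
            diagonal (fun i => Real.sqrt (hN.1.eigenvalues i)) *
            (star hN.1.eigenvectorUnitary : Matrix (Fin n) (Fin n) ℝ)) with hS
  have hU : (star hN.1.eigenvectorUnitary : Matrix (Fin n) (Fin n) ℝ) * (hN.1.eigenvectorUnitary : Matrix (Fin n) (Fin n) ℝ) = 1 := Unitary.coe_star_mul_self _
  have hSS : S * S = N := by
    have hd : diagonal (fun i => Real.sqrt (hN.1.eigenvalues i)) * diagonal (fun i => Real.sqrt (hN.1.eigenvalues i)) = diagonal (RCLike.ofReal ∘ hN.1.eigenvalues) := by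
      rw [diagonal_mul_diagonal]; congr 1; funext i
      simp [Real.mul_self_sqrt (hN.eigenvalues_nonneg i)]
    conv_rhs => rw [hN.1.spectral_theorem]
    simp only [S, Unitary.conjStarAlgAut_apply]
    rw [← hd]
    simp only [Matrix.mul_assoc]
    rw [← Matrix.mul_assoc (star _ : Matrix _ _ ℝ) _ (diagonal _ * _), hU, Matrix.one_mul]
  have hSt : Sᵀ = S := by
    rw [← conjTranspose_eq_transpose_of_trivial]
    simp only [S, conjTranspose_mul, star_eq_conjTranspose, conjTranspose_conjTranspose,
      diagonal_conjTranspose, star_trivial, Matrix.mul_assoc]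
  have hvm : ∀ v : Fin n → ℝ, v ᵥ* S = S *ᵥ v := by
    intro v; conv_lhs => rw [← hSt]
    rw [vecMul_transpose]
  have h1 : (X.mulVec y) ⬝ᵥ N.mulVec (X.mulVec y) =
      ((S * X).mulVec y) ⬝ᵥ ((S * X).mulVec y) := by
    rw [← hSS, ← mulVec_mulVec, dotProduct_mulVec (X.mulVec y), hvm, mulVec_mulVec]
  rw [h1, aux_dot_eq_norm_sq, aux_dot_eq_norm_sq y]
  set ye : EuclideanSpace ℝ (Fin k) := (EuclideanSpace.equiv (Fin k) ℝ).symm y with hye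
  have hle := Matrix.l2_opNorm_mulVec (S * X) ye
  have h2 : ‖(EuclideanSpace.equiv (Fin n) ℝ).symm ((S * X).mulVec y)‖ ≤ ‖S * X‖ * ‖ye‖ := hle
  calc ‖(EuclideanSpace.equiv (Fin n) ℝ).symm ((S * X).mulVec y)‖ ^ 2
      ≤ (‖S * X‖ * ‖ye‖) ^ 2 := by
        apply pow_le_pow_left₀ (norm_nonneg _) h2
    _ = ‖S * X‖ ^ 2 * ‖ye‖ ^ 2 := by ring

end Aux


/-- Theorem 2 of the paper (single mode pair): `V(x,x̂) = (x-Px̂)ᵀM(x-Px̂)` is a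
simulation function from the abstract linear system to the concrete one with the
given interface input `u`. Here `‖·‖` is the L2 operator norm of a matrix, and
`xᵀMx` is written via dot products. -/
theorem stmt_8 {n nh m mh nw q : ℕ}
    (A : Matrix (Fin n) (Fin n) ℝ) (B : Matrix (Fin n) (Fin m) ℝ)
    (C : Matrix (Fin q) (Fin n) ℝ) (D : Matrix (Fin n) (Fin nw) ℝ)
    (Ah : Matrix (Fin nh) (Fin nh) ℝ) (Bh : Matrix (Fin nh) (Fin mh) ℝ)
    (Ch : Matrix (Fin q) (Fin nh) ℝ) (Dh : Matrix (Fin nh) (Fin nw) ℝ)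
    (P : Matrix (Fin n) (Fin nh) ℝ) (K : Matrix (Fin m) (Fin n) ℝ)
    (Q : Matrix (Fin m) (Fin nh) ℝ) (R : Matrix (Fin m) (Fin mh) ℝ)
    (T : Matrix (Fin m) (Fin nw) ℝ) (M M' : Matrix (Fin n) (Fin n) ℝ) (κ : ℝ)
    (hM : M.PosDef) (hM' : M'.PosDef) (hκ0 : 0 < κ) (hκ1 : κ < 1)
    (hC : (M - Cᵀ * C).PosSemidef)
    (hLMI : ((-κ) • M - ((3 : ℝ) • ((A + B * K)ᵀ * M' * (A + B * K)) - M)).PosSemidef)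
    (hAP : A * P = P * Ah - B * Q)
    (hD : D = P * Dh - B * T)
    (hCP : C * P = Ch) :
    ∀ (x : Fin n → ℝ) (xh : Fin nh → ℝ) (w wh : Fin nw → ℝ) (uh : Fin mh → ℝ),
      ((C.mulVec x - Ch.mulVec xh) ⬝ᵥ (C.mulVec x - Ch.mulVec xh) ≤
        (x - P.mulVec xh) ⬝ᵥ M.mulVec (x - P.mulVec xh)) ∧
      (letI u := K.mulVec (x - P.mulVec xh) + Q.mulVec xh + R.mulVec uh + T.mulVec wh
       letI x' := A.mulVec x + D.mulVec w + B.mulVec u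
       letI xh' := Ah.mulVec xh + Dh.mulVec wh + Bh.mulVec uh
       (x' - P.mulVec xh') ⬝ᵥ M'.mulVec (x' - P.mulVec xh') -
         (x - P.mulVec xh) ⬝ᵥ M.mulVec (x - P.mulVec xh) ≤
       -κ * ((x - P.mulVec xh) ⬝ᵥ M.mulVec (x - P.mulVec xh)) +
         3 * ‖((hM'.posSemidef.1.eigenvectorUnitary : Matrix (Fin n) (Fin n) ℝ) *
            diagonal (fun i => Real.sqrt (hM'.posSemidef.1.eigenvalues i)) *
            (star hM'.posSemidef.1.eigenvectorUnitary : Matrix (Fin n) (Fin n) ℝ)) * D‖ ^ 2 * ((w - wh) ⬝ᵥ (w - wh)) +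
         3 * ‖((hM'.posSemidef.1.eigenvectorUnitary : Matrix (Fin n) (Fin n) ℝ) *
            diagonal (fun i => Real.sqrt (hM'.posSemidef.1.eigenvalues i)) *
            (star hM'.posSemidef.1.eigenvectorUnitary : Matrix (Fin n) (Fin n) ℝ)) *
            (B * R - P * Bh)‖ ^ 2 * (uh ⬝ᵥ uh)) := by
  intro x xh w wh uh
  set e := x - P.mulVec xh with he
  have hx : x = e + P.mulVec xh := by rw [he]; abel
  constructor
  · have hCe : C.mulVec x - Ch.mulVec xh = C.mulVec e := by
      rw [← hCP, ← mulVec_mulVec, ← mulVec_sub]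
    rw [hCe, aux_quad_pull1]
    have h0 := aux_dot_nonneg hC e
    simp only [sub_mulVec, dotProduct_sub] at h0
    linarith
  · set a := (A + B * K).mulVec e with ha
    set b := D.mulVec (w - wh) with hb
    set c := (B * R - P * Bh).mulVec uh with hc
    have key : A.mulVec x + D.mulVec w +
        B.mulVec (K.mulVec e + Q.mulVec xh + R.mulVec uh + T.mulVec wh) -
        P.mulVec (Ah.mulVec xh + Dh.mulVec wh + Bh.mulVec uh) = a + b + c := by
      rw [hx, ha, hb, hc]
      simp only [mulVec_add, mulVec_sub, mulVec_mulVec, add_mulVec, sub_mulVec, hD, hAP]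
      abel
    rw [key]
    have h3 := aux_three hM'.posSemidef a b c
    have hqa : a ⬝ᵥ M'.mulVec a = e ⬝ᵥ ((A + B * K)ᵀ * M' * (A + B * K)).mulVec e :=
      aux_quad_pull (A + B * K) M' e
    have hL := aux_dot_nonneg hLMI e
    simp only [sub_mulVec, smul_mulVec, dotProduct_sub, dotProduct_smul,
      smul_eq_mul] at hL
    have hqb := aux_norm_bound hM'.posSemidef D (w - wh)
    have hqc := aux_norm_bound hM'.posSemidef (B * R - P * Bh) uh
    rw [← hb] at hqb
    rw [← hc] at hqc
    linarith
end
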